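/- Let A ⊆ ℝ^T be a compact Max-Plus convex set. For μ ∈ IA define β_A(μ) ∈ ℝ^T by pr_t(β_A(μ)) = μ(pr_t|_A) for each t ∈ T. Then β_A(μ) ∈ A for every idempotent measure μ on A, and the idempotent barycenter map β_A: IA → A is continuous. -/

import Mathlib

open Topology

noncomputable section

def IsIdempotentMeasure {Z : Type*} [TopologicalSpace Z] (μ : C(Z, ℝ) → ℝ) : Prop :=
  μ 1 = 1 ∧ (∀ (c : ℝ) (φ : C(Z, ℝ)), μ (ContinuousMap.const Z c + φ) = c + μ φ) ∧
    ∀ φ ψ : C(Z, ℝ), μ (φ ⊔ ψ) = max (μ φ) (μ ψ)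

abbrev IM (Z : Type*) [TopologicalSpace Z] : Type _ :=
  {μ : C(Z, ℝ) → ℝ // IsIdempotentMeasure μ}

def density {Z : Type*} [TopologicalSpace Z] (μ : C(Z, ℝ) → ℝ) (z : Z) : EReal :=
  ⨅ φ : {φ : C(Z, ℝ) // φ ≤ 0 ∧ φ z = 0}, ((μ φ.1 : ℝ) : EReal)

def pushforward {X Y : Type*} [TopologicalSpace X] [TopologicalSpace Y]
    (f : C(X, Y)) (μ : C(X, ℝ) → ℝ) : C(Y, ℝ) → ℝ :=
  fun ψ => μ (ψ.comp f)

def mpComb {τ : Type*} (α : EReal) (a b : τ → ℝ) : τ → ℝ :=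
  fun t => ((α + (a t : EReal)) ⊔ ((b t : ℝ) : EReal)).toReal

def MaxPlusConvex {τ : Type*} (A : Set (τ → ℝ)) : Prop :=
  ∀ a ∈ A, ∀ b ∈ A, ∀ α : EReal, α ≤ 0 → mpComb α a b ∈ A

def projCM {T : Type*} (A : Set (T → ℝ)) (t : T) : C(A, ℝ) :=
  ⟨fun a => a.1 t, (continuous_apply t).comp continuous_subtype_val⟩

def tilde {Z : Type*} [TopologicalSpace Z] (φ : C(Z, ℝ)) : C(IM Z, ℝ) :=
  ⟨fun ν => ν.1 φ, (continuous_apply φ).comp continuous_subtype_val⟩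

section aux
variable {Z : Type*} [TopologicalSpace Z] {μ : C(Z, ℝ) → ℝ}

lemma mu_zero (hμ : IsIdempotentMeasure μ) : μ 0 = 0 := by
  have h := hμ.2.1 1 0
  have h1 : ContinuousMap.const Z 1 + 0 = (1 : C(Z, ℝ)) := by ext z; simp
  rw [h1, hμ.1] at h
  linarith

lemma mu_mono (hμ : IsIdempotentMeasure μ) {φ ψ : C(Z, ℝ)} (h : φ ≤ ψ) : μ φ ≤ μ ψ := by
  have h2 := hμ.2.2 φ ψ
  rw [sup_eq_right.mpr h] at h2
  rw [h2]; exact le_max_left _ _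

lemma mu_sup' (hμ : IsIdempotentMeasure μ) {ι : Type*} (J : Finset ι) (hJ : J.Nonempty)
    (ψ : ι → C(Z, ℝ)) : μ (J.sup' hJ ψ) = J.sup' hJ (fun j => μ (ψ j)) := by
  induction hJ using Finset.Nonempty.cons_induction with
  | singleton j => simp
  | cons j s hjs hs ih => rw [Finset.sup'_cons hs, Finset.sup'_cons hs, hμ.2.2, ih]

lemma mu_nonempty (hμ : IsIdempotentMeasure μ) [h : IsEmpty Z] : False := by
  have : (1 : C(Z, ℝ)) = 0 := by ext z; exact h.elim z
  have h1 := hμ.1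
  rw [this, mu_zero hμ] at h1
  norm_num at h1

end aux

lemma mpComb_real {τ : Type*} (l : ℝ) (a b : τ → ℝ) :
    mpComb (l : EReal) a b = fun t => max (l + a t) (b t) := by
  funext t
  have h1 : ((l : EReal) + (a t : EReal)) ⊔ ((b t : ℝ) : EReal)
      = ((max (l + a t) (b t) : ℝ) : EReal) := by
    rw [← EReal.coe_add]
    rcases le_total (l + a t) (b t) with h | h
    · rw [max_eq_right h, sup_eq_right.mpr (EReal.coe_le_coe_iff.mpr h)]
    · rw [max_eq_left h, sup_eq_left.mpr (EReal.coe_le_coe_iff.mpr h)]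
  simp [mpComb, h1]

lemma sup'_mem {τ : Type*} {A : Set (τ → ℝ)} (hconv : MaxPlusConvex A) {ι : Type*}
    (J : Finset ι) (hJ : J.Nonempty) (l : ι → ℝ) (p : ι → (τ → ℝ))
    (hl : ∀ j ∈ J, l j ≤ 0) (hp : ∀ j ∈ J, p j ∈ A)
    (a0 : τ → ℝ) (ha0 : a0 ∈ A) :
    (fun t => max (J.sup' hJ (fun j => l j + p j t)) (a0 t)) ∈ A := by
  induction hJ using Finset.Nonempty.cons_induction with
  | singleton j =>
      have h : (fun t => max (({j} : Finset ι).sup' (by simp) (fun j => l j + p j t)) (a0 t))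
          = mpComb (l j : EReal) (p j) a0 := by
        rw [mpComb_real]; funext t; simp
      rw [h]
      exact hconv _ (hp j (by simp)) _ ha0 _ (EReal.coe_nonpos.mpr (hl j (by simp)))
  | cons j s hjs hs ih =>
      have ihm : (fun t => max (s.sup' hs (fun j => l j + p j t)) (a0 t)) ∈ A :=
        ih (fun i hi => hl i (by simp [hi])) (fun i hi => hp i (by simp [hi]))
      have h : (fun t => max ((Finset.cons j s hjs).sup' (by simp) (fun j => l j + p j t)) (a0 t))
          = mpComb (l j : EReal) (p j)
              (fun t => max (s.sup' hs (fun j => l j + p j t)) (a0 t)) := by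
        rw [mpComb_real]; funext t
        rw [Finset.sup'_cons hs, max_assoc]
      rw [h]
      exact hconv _ (hp j (by simp)) _ ihm _ (EReal.coe_nonpos.mpr (hl j (by simp)))

lemma key_approx {T : Type*} (A : Set (T → ℝ)) (hA : IsCompact A) (hconv : MaxPlusConvex A)
    (μ : C(A, ℝ) → ℝ) (hμ : IsIdempotentMeasure μ) (F : Finset T) {ε : ℝ} (hε : 0 < ε) :
    ∃ a ∈ A, ∀ t ∈ F, |a t - μ (projCM A t)| ≤ ε := by
  -- A is nonempty
  have hAne : A.Nonempty := by
    by_contra h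
    rw [Set.not_nonempty_iff_eq_empty] at h
    subst h
    exact mu_nonempty hμ (h := ⟨fun z => z.2⟩)
  rcases F.eq_empty_or_nonempty with hFe | hF
  · exact ⟨hAne.choose, hAne.choose_spec, by simp [hFe]⟩
  haveI : CompactSpace A := isCompact_iff_compactSpace.mp hA
  haveI : Nonempty A := ⟨⟨hAne.choose, hAne.choose_spec⟩⟩
  -- bound M
  obtain ⟨M, hM0, hM⟩ : ∃ M, 0 ≤ M ∧ ∀ x : A, ∀ t ∈ F, |x.1 t| ≤ M := by
    have hc : Continuous (fun x : A => F.sup' hF (fun t => |x.1 t|)) :=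
      Continuous.finset_sup'_apply hF (fun t _ =>
        ((continuous_apply t).comp continuous_subtype_val).abs)
    obtain ⟨x0, -, hx0⟩ := isCompact_univ.exists_isMaxOn Set.univ_nonempty hc.continuousOn
    refine ⟨F.sup' hF (fun t => |x0.1 t|), ?_, fun x t ht =>
      le_trans (Finset.le_sup' (fun t => |x.1 t|) ht) (hx0 (Set.mem_univ x))⟩
    obtain ⟨t, ht⟩ := hF
    exact le_trans (abs_nonneg _) (Finset.le_sup' (fun t => |x0.1 t|) ht)
  -- distance functions and cover
  set g : A → A → ℝ := fun a x => F.sup' hF (fun t => |x.1 t - a.1 t|) with hg_def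
  have hgcont : ∀ a : A, Continuous (g a) := fun a =>
    Continuous.finset_sup'_apply hF (fun t _ =>
      (((continuous_apply t).comp continuous_subtype_val).sub continuous_const).abs)
  set U : A → Set A := fun a => {x | g a x < ε / 2} with hU_def
  have hgle : ∀ (b x : A), ∀ t' ∈ F, |x.1 t' - b.1 t'| ≤ g b x := by
    intro b x t' ht'
    simp only [hg_def]
    exact Finset.le_sup' (fun s => |x.1 s - b.1 s|) ht'
  have hUopen : ∀ a : A, IsOpen (U a) := fun a => isOpen_lt (hgcont a) continuous_const
  have hself : ∀ a : A, a ∈ U a := by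
    intro a
    have : g a a = F.sup' hF (fun _ => (0 : ℝ)) := by
      apply Finset.sup'_congr hF rfl
      intro t _; simp
    simp only [hU_def, Set.mem_setOf_eq, this, Finset.sup'_const]
    linarith
  obtain ⟨J, hJcover⟩ := isCompact_univ.elim_finite_subcover U hUopen
    (fun x _ => Set.mem_iUnion.mpr ⟨x, hself x⟩)
  have hJmem : ∀ x : A, ∃ j ∈ J, x ∈ U j := by
    intro x
    have := hJcover (Set.mem_univ x)
    simpa using this
  obtain ⟨j1, hj1J, _⟩ := hJmem (Classical.arbitrary A)
  have hJne : J.Nonempty := ⟨j1, hj1J⟩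
  -- bump functions
  set c : ℝ := 4 * M / ε with hc_def
  have hc0 : 0 ≤ c := by positivity
  set χ : A → C(A, ℝ) := fun a =>
    ⟨fun x => -c * max 0 (g a x - ε / 2),
      (continuous_const.mul (continuous_const.max ((hgcont a).sub continuous_const)))⟩
    with hχ_def
  have hχ_le : ∀ a : A, χ a ≤ 0 := by
    intro a
    rw [ContinuousMap.le_def]
    intro x
    have : -c * max 0 (g a x - ε / 2) ≤ 0 :=
      mul_nonpos_of_nonpos_of_nonneg (by linarith) (le_max_left _ _)
    simpa [hχ_def] using this
  have hχ_zero : ∀ a : A, ∀ x : A, g a x < ε / 2 → χ a x = 0 := by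
    intro a x hx
    simp only [hχ_def, ContinuousMap.coe_mk]
    rw [max_eq_left (by linarith)]
    ring
  -- weights
  set lam : A → ℝ := fun j => μ (χ j) with hlam_def
  have hlam_le : ∀ j : A, lam j ≤ 0 := fun j => by
    have := mu_mono hμ (hχ_le j)
    rwa [mu_zero hμ] at this
  have hsupχ : J.sup' hJne χ = 0 := by
    ext x
    rw [ContinuousMap.sup'_apply]
    have hle : J.sup' hJne (fun j => χ j x) ≤ 0 :=
      Finset.sup'_le _ _ fun j _ => by
        have := hχ_le j
        rw [ContinuousMap.le_def] at this
        simpa using this x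
    obtain ⟨j, hjJ, hjU⟩ := hJmem x
    have hge : (0:ℝ) ≤ J.sup' hJne (fun j => χ j x) := by
      have := Finset.le_sup' (fun j => χ j x) hjJ
      rw [hχ_zero j x hjU] at this
      exact this
    simpa using le_antisymm hle hge
  have hlamsup : J.sup' hJne lam = 0 := by
    have := mu_sup' hμ J hJne χ
    rw [hsupχ, mu_zero hμ] at this
    exact this.symm
  -- the candidate point
  obtain ⟨j0, hj0J, hj0⟩ := Finset.exists_mem_eq_sup' hJne lam
  have hlamj0 : lam j0 = 0 := by rw [← hj0, hlamsup]
  set a : T → ℝ := fun t => max (J.sup' hJne (fun j => lam j + j.1 t)) (j0.1 t) with ha_def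
  have haA : a ∈ A :=
    sup'_mem hconv J hJne lam (fun j => j.1) (fun j _ => hlam_le j) (fun j _ => j.2) _ j0.2
  have ha_eq : ∀ t, a t = J.sup' hJne (fun j => lam j + j.1 t) := by
    intro t
    have h1 : j0.1 t ≤ J.sup' hJne (fun j => lam j + j.1 t) := by
      have := Finset.le_sup' (fun j : A => lam j + j.1 t) hj0J
      rwa [hlamj0, zero_add] at this
    simp [ha_def, max_eq_left h1]
  refine ⟨a, haA, fun t ht => ?_⟩
  -- estimate for coordinate t
  set φt : C(A, ℝ) := projCM A t with hφt_def
  set S : C(A, ℝ) := J.sup' hJne (fun j => ContinuousMap.const A (j.1 t) + χ j) with hS_def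
  have hμS : μ S = J.sup' hJne (fun j => lam j + j.1 t) := by
    rw [hS_def, mu_sup' hμ]
    apply Finset.sup'_congr hJne rfl
    intro j _
    rw [hμ.2.1, add_comm]
  -- upper bound : S ≤ const ε + φt
  have hupper : S ≤ ContinuousMap.const A ε + φt := by
    rw [hS_def]
    apply Finset.sup'_le
    intro j _
    rw [ContinuousMap.le_def]
    intro x
    simp only [ContinuousMap.add_apply, ContinuousMap.const_apply, hφt_def, projCM,
      ContinuousMap.coe_mk, hχ_def]
    rcases le_or_gt (g j x) ε with hcase | hcase
    · have habs : |x.1 t - j.1 t| ≤ ε := le_trans (hgle j x t ht) hcase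
      have h1 : j.1 t ≤ x.1 t + ε := by
        have := abs_le.mp habs
        linarith [this.1]
      have h2 : -c * max 0 (g j x - ε / 2) ≤ 0 :=
        mul_nonpos_of_nonpos_of_nonneg (by linarith) (le_max_left _ _)
      linarith
    · have h1 : max 0 (g j x - ε / 2) = g j x - ε / 2 := max_eq_right (by linarith)
      have h2 : -c * max 0 (g j x - ε / 2) ≤ -c * (ε / 2) := by
        rw [h1]
        apply neg_le_neg at hc0
        nlinarith
      have h3 : -c * (ε / 2) = -(2 * M) := by
        rw [hc_def]; field_simp; ring
      have h4 : |j.1 t| ≤ M := hM j t ht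
      have h5 : |x.1 t| ≤ M := hM x t ht
      have := abs_le.mp h4
      have := abs_le.mp h5
      linarith [abs_le.mp h4, abs_le.mp h5]
  -- lower bound : φt ≤ const ε + S
  have hlower : φt ≤ ContinuousMap.const A ε + S := by
    rw [ContinuousMap.le_def]
    intro x
    obtain ⟨j, hjJ, hjU⟩ := hJmem x
    have habs : |x.1 t - j.1 t| ≤ g j x := hgle j x t ht
    have hg2 : g j x < ε / 2 := hjU
    have hSx : j.1 t + χ j x ≤ S x := by
      rw [hS_def, ContinuousMap.sup'_apply]
      exact Finset.le_sup' (fun j : A => (ContinuousMap.const A (j.1 t) + χ j) x) hjJ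
    rw [hχ_zero j x hg2] at hSx
    have h1 : x.1 t ≤ j.1 t + ε / 2 := by
      have := abs_le.mp habs
      linarith [this.1]
    simp only [ContinuousMap.add_apply, ContinuousMap.const_apply, hφt_def, projCM,
      ContinuousMap.coe_mk]
    linarith
  have hb1 : μ S ≤ ε + μ φt := by
    have := mu_mono hμ hupper
    rwa [hμ.2.1] at this
  have hb2 : μ φt ≤ ε + μ S := by
    have := mu_mono hμ hlower
    rwa [hμ.2.1] at this
  rw [ha_eq t, ← hμS]
  rw [abs_sub_le_iff]
  constructor <;> linarith

theorem idempotent_barycenter_wellDefined {T : Type*} (A : Set (T → ℝ))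
    (hA : IsCompact A) (hconv : MaxPlusConvex A) :
    (∀ μ : C(A, ℝ) → ℝ, IsIdempotentMeasure μ → (fun t => μ (projCM A t)) ∈ A) ∧
    Continuous (fun μ : IM A => fun t => μ.1 (projCM A t)) := by
  constructor
  · intro μ hμ
    set b : T → ℝ := fun t => μ (projCM A t) with hb
    have hb_cl : b ∈ closure A := by
      rw [mem_closure_iff_nhds]
      intro U hU
      rw [nhds_pi, Filter.mem_pi] at hU
      obtain ⟨I, hIfin, V, hV, hsub⟩ := hU
      have hr : ∀ t, ∃ r > 0, Metric.ball (b t) r ⊆ V t := fun t =>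
        Metric.mem_nhds_iff.mp (hV t)
      choose r hrpos hrball using hr
      set F : Finset T := hIfin.toFinset with hF_def
      obtain ⟨δ, hδpos, hδle⟩ : ∃ δ > 0, ∀ t ∈ F, δ ≤ r t := by
        rcases F.eq_empty_or_nonempty with hFe | hFne
        · exact ⟨1, one_pos, by simp [hFe]⟩
        · refine ⟨F.inf' hFne r, ?_, fun t ht => Finset.inf'_le r ht⟩
          obtain ⟨t0, ht0, heq⟩ := Finset.exists_mem_eq_inf' hFne r
          rw [heq]; exact hrpos t0
      obtain ⟨a, haA, ha⟩ := key_approx A hA hconv μ hμ F (half_pos hδpos)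
      refine ⟨a, hsub ?_, haA⟩
      intro t htI
      have htF : t ∈ F := hIfin.mem_toFinset.mpr htI
      apply hrball t
      rw [Metric.mem_ball, Real.dist_eq]
      calc |a t - b t| ≤ δ / 2 := ha t htF
        _ < δ := by linarith
        _ ≤ r t := hδle t htF
    rwa [hA.isClosed.closure_eq] at hb_cl
  · exact continuous_pi fun t =>
      (continuous_apply (projCM A t)).comp continuous_subtype_val
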